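/- Consider the Facility Location instance P constructed from a BHM instance (n, M, x, w) with opening cost f > 0. If x_i ⊕ x_j = w_{i,j} for every pair (i, j) ∈ M (the YES case), then the optimal Uniform Facility Location cost of P is at most 2n·(f + √2). -/

import Mathlib

/-- The ambient Euclidean space `ℝ^{8n}`: each index `i ∈ {1, …, 2n}` owns the
four coordinates `(i, 0), (i, 1), (i, 2), (i, 3)`. -/
abbrev bhmSpace (n : ℕ) := EuclideanSpace ℝ (Fin (2 * n) × Fin 4)

/-- The 0/1 vector with 1s exactly in the pair of coordinates
`(i, 0), (i, 1)` (if `b = false`) or `(i, 2), (i, 3)` (if `b = true`). -/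
noncomputable def onesPair (n : ℕ) (i : Fin (2 * n)) (b : Bool) : bhmSpace n :=
  WithLp.toLp 2 (fun q : Fin (2 * n) × Fin 4 => if q.1 = i ∧ (b = true ↔ 2 ≤ (q.2 : ℕ)) then 1 else 0)

/-- The multiset of clients of the Facility Location instance built from a BHM
instance: `100n` copies of `s_i^{x_i} = onesPair n i (x i)` for each
`i ∈ {1, …, 2n}`, plus, for each matching edge `k` joining `(e k).1` to
`(e k).2` with bit `w k`, one copy of
`t⁰ = onesPair n (e k).1 false + onesPair n (e k).2 (!(w k))` and one copy of
`t¹ = onesPair n (e k).1 true + onesPair n (e k).2 (w k)`. -/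
noncomputable def bhmClients (n : ℕ) (x : Fin (2 * n) → Bool)
    (e : Fin n → Fin (2 * n) × Fin (2 * n)) (w : Fin n → Bool) :
    Multiset (bhmSpace n) :=
  (Finset.univ : Finset (Fin (2 * n))).val.bind
      (fun i => Multiset.replicate (100 * n) (onesPair n i (x i)))
    + (Finset.univ : Finset (Fin n)).val.bind
      (fun k => {onesPair n (e k).1 false + onesPair n (e k).2 (!(w k)),
                 onesPair n (e k).1 true + onesPair n (e k).2 (w k)})

/-- The Uniform Facility Location cost (with multiplicity) of opening the
nonempty finite facility set `F` for the BHM instance, with opening cost `f`. -/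
noncomputable def bhmCost (n : ℕ) (x : Fin (2 * n) → Bool)
    (e : Fin n → Fin (2 * n) × Fin (2 * n)) (w : Fin n → Bool)
    (f : ℝ) (F : Finset (bhmSpace n)) : ℝ :=
  ((bhmClients n x e w).map (fun p => Metric.infDist p (F : Set (bhmSpace n)))).sum
    + f * F.card

/-- The optimal Uniform Facility Location cost of the BHM instance. -/
noncomputable def bhmOPT (n : ℕ) (x : Fin (2 * n) → Bool)
    (e : Fin n → Fin (2 * n) × Fin (2 * n)) (w : Fin n → Bool) (f : ℝ) : ℝ :=
  sInf {c : ℝ | ∃ F : Finset (bhmSpace n), F.Nonempty ∧ c = bhmCost n x e w f F}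

lemma norm_onesPair (n : ℕ) (i : Fin (2*n)) (b : Bool) :
    ‖onesPair n i b‖ = Real.sqrt 2 := by
  rw [EuclideanSpace.norm_eq]
  congr 1
  simp only [onesPair]
  rw [Fintype.sum_prod_type]
  have h : ∀ a : Fin (2*n),
      (∑ j : Fin 4, ‖(if a = i ∧ (b = true ↔ 2 ≤ (j:ℕ)) then (1:ℝ) else 0)‖^2)
        = if a = i then 2 else 0 := by
    intro a
    by_cases h : a = i
    · subst h; cases b <;> rw [Fin.sum_univ_four] <;>
        norm_num [show ((3:Fin 4):ℕ)=3 from rfl, show ((2:Fin 4):ℕ)=2 from rfl,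
          show ((1:Fin 4):ℕ)=1 from rfl, show ((0:Fin 4):ℕ)=0 from rfl]
    · simp [h]
  rw [Finset.sum_congr rfl (fun a _ => h a)]
  simp

/-- **YES case.** If `e` describes a perfect matching on
`{1, …, 2n}` and `x_i ⊕ x_j = w_{i,j}` for every edge, then the optimal Uniform
Facility Location cost of the instance is at most `2n·(f + √2)`. -/
theorem stmt_16 (n : ℕ) (hn : 1 ≤ n)
    (x : Fin (2 * n) → Bool) (e : Fin n → Fin (2 * n) × Fin (2 * n))
    (w : Fin n → Bool)
    (hmatch : Function.Bijective
      (fun q : Fin n × Bool => if q.2 then (e q.1).2 else (e q.1).1))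
    (f : ℝ) (hf : 0 < f)
    (hyes : ∀ k, Bool.xor (x (e k).1) (x (e k).2) = w k) :
    bhmOPT n x e w f ≤ 2 * n * (f + Real.sqrt 2) := by
  classical
  have hnz : Nonempty (Fin (2*n)) := ⟨⟨0, by omega⟩⟩
  set F : Finset (bhmSpace n) :=
    Finset.image (fun i => onesPair n i (x i)) Finset.univ with hF
  have hFne : F.Nonempty := Finset.Nonempty.image Finset.univ_nonempty _
  have hmem : ∀ i : Fin (2*n), onesPair n i (x i) ∈ (F : Set (bhmSpace n)) := by
    intro i
    exact Finset.mem_coe.2 (Finset.mem_image_of_mem _ (Finset.mem_univ i))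
  -- per-edge distance bounds
  have hd0 : ∀ k : Fin n,
      Metric.infDist (onesPair n (e k).1 false + onesPair n (e k).2 (!(w k)))
        (F : Set (bhmSpace n)) ≤ Real.sqrt 2 := by
    intro k
    cases hx : x (e k).1 with
    | false =>
      have hq := hmem (e k).1
      rw [hx] at hq
      calc Metric.infDist _ (F : Set (bhmSpace n)) ≤ _ :=
            Metric.infDist_le_dist_of_mem hq
        _ = Real.sqrt 2 := by
            rw [dist_eq_norm, add_sub_cancel_left, norm_onesPair]
    | true =>
      have h2 : x (e k).2 = !(w k) := by
        have := hyes k; rw [hx] at this; revert this; cases x (e k).2 <;> cases w k <;> simp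
      have hq := hmem (e k).2
      rw [h2] at hq
      calc Metric.infDist _ (F : Set (bhmSpace n)) ≤ _ :=
            Metric.infDist_le_dist_of_mem hq
        _ = Real.sqrt 2 := by
            rw [dist_eq_norm, add_sub_cancel_right, norm_onesPair]
  have hd1 : ∀ k : Fin n,
      Metric.infDist (onesPair n (e k).1 true + onesPair n (e k).2 (w k))
        (F : Set (bhmSpace n)) ≤ Real.sqrt 2 := by
    intro k
    cases hx : x (e k).1 with
    | true =>
      have hq := hmem (e k).1
      rw [hx] at hq
      calc Metric.infDist _ (F : Set (bhmSpace n)) ≤ _ :=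
            Metric.infDist_le_dist_of_mem hq
        _ = Real.sqrt 2 := by
            rw [dist_eq_norm, add_sub_cancel_left, norm_onesPair]
    | false =>
      have h2 : x (e k).2 = w k := by
        have := hyes k; rw [hx] at this; revert this; cases x (e k).2 <;> cases w k <;> simp
      have hq := hmem (e k).2
      rw [h2] at hq
      calc Metric.infDist _ (F : Set (bhmSpace n)) ≤ _ :=
            Metric.infDist_le_dist_of_mem hq
        _ = Real.sqrt 2 := by
            rw [dist_eq_norm, add_sub_cancel_right, norm_onesPair]
  -- cost of F
  have hcost : bhmCost n x e w f F ≤ 2 * n * (f + Real.sqrt 2) := by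
    unfold bhmCost bhmClients
    rw [Multiset.map_add, Multiset.sum_add]
    have hA : ((((Finset.univ : Finset (Fin (2*n))).val.bind
        (fun i => Multiset.replicate (100 * n) (onesPair n i (x i)))).map
        (fun p => Metric.infDist p (F : Set (bhmSpace n)))).sum) = 0 := by
      apply Multiset.sum_eq_zero
      intro z hz
      rw [Multiset.mem_map] at hz
      obtain ⟨p, hp, rfl⟩ := hz
      rw [Multiset.mem_bind] at hp
      obtain ⟨i, _, hp⟩ := hp
      rw [Multiset.mem_replicate] at hp
      rw [hp.2]
      exact Metric.infDist_zero_of_mem (hmem i)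
    rw [hA, zero_add]
    have hB : ((((Finset.univ : Finset (Fin n)).val.bind
        (fun k => ({onesPair n (e k).1 false + onesPair n (e k).2 (!(w k)),
          onesPair n (e k).1 true + onesPair n (e k).2 (w k)} : Multiset (bhmSpace n)))).map
        (fun p => Metric.infDist p (F : Set (bhmSpace n)))).sum)
        ≤ n * (2 * Real.sqrt 2) := by
      rw [Multiset.map_bind, Multiset.sum_bind]
      have : ∀ k : Fin n,
          ((({onesPair n (e k).1 false + onesPair n (e k).2 (!(w k)),
            onesPair n (e k).1 true + onesPair n (e k).2 (w k)} : Multiset (bhmSpace n)).map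
            (fun p => Metric.infDist p (F : Set (bhmSpace n)))).sum)
            ≤ 2 * Real.sqrt 2 := by
        intro k
        simp only [Multiset.insert_eq_cons, Multiset.map_cons, Multiset.map_singleton,
          Multiset.sum_cons, Multiset.sum_singleton]
        have := hd0 k; have := hd1 k; linarith
      calc ((Finset.univ : Finset (Fin n)).val.map _).sum
          = ∑ k : Fin n, _ := rfl
        _ ≤ ∑ _k : Fin n, 2 * Real.sqrt 2 := Finset.sum_le_sum (fun k _ => this k)
        _ = n * (2 * Real.sqrt 2) := by
            rw [Finset.sum_const, Finset.card_univ, Fintype.card_fin, nsmul_eq_mul]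
    have hcard : (F.card : ℝ) ≤ 2 * n := by
      have := Finset.card_image_le (s := (Finset.univ : Finset (Fin (2*n))))
        (f := fun i => onesPair n i (x i))
      rw [Finset.card_univ, Fintype.card_fin] at this
      exact_mod_cast le_trans (Nat.cast_le.2 this) (le_of_eq (by push_cast; ring))
    have hfc : f * F.card ≤ f * (2 * n) := mul_le_mul_of_nonneg_left hcard hf.le
    nlinarith [Real.sqrt_nonneg 2]
  -- conclude via sInf
  have hbdd : ∀ c ∈ {c : ℝ | ∃ F : Finset (bhmSpace n), F.Nonempty ∧ c = bhmCost n x e w f F},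
      (0:ℝ) ≤ c := by
    rintro c ⟨F', hF', rfl⟩
    unfold bhmCost
    have h1 : (0:ℝ) ≤ ((bhmClients n x e w).map
        (fun p => Metric.infDist p (F' : Set (bhmSpace n)))).sum := by
      apply Multiset.sum_nonneg
      intro z hz
      obtain ⟨p, _, rfl⟩ := Multiset.mem_map.1 hz
      exact Metric.infDist_nonneg
    have h2 : (0:ℝ) ≤ f * F'.card := by positivity
    linarith
  calc bhmOPT n x e w f ≤ bhmCost n x e w f F :=
        csInf_le ⟨0, hbdd⟩ ⟨F, hFne, rfl⟩
    _ ≤ 2 * n * (f + Real.sqrt 2) := hcost
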